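/- If the classical d-dimensional skew-normal density f(x) = 2·φ_d(x; Ω)·Φ(αᵀω⁻¹x) with Ω block-diagonal, Ω = diag(Ω₁, Ω₂), factorizes as a product f(x) = g₁(x₁)·g₂(x₂) of functions of the corresponding two blocks of coordinates, then at least one of the two corresponding blocks α₁, α₂ of the slant parameter α is zero (so at most one factor is a skew-normal with non-vanishing slant, the other being normal). -/

import Mathlib

open Real MeasureTheory

/-- Standard normal density. -/
noncomputable def stdNormalPDF (x : ℝ) : ℝ :=
  (Real.sqrt (2 * Real.pi))⁻¹ * Real.exp (-x ^ 2 / 2)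

/-- Standard normal distribution function. -/
noncomputable def stdNormalCDF (x : ℝ) : ℝ :=
  ∫ t in Set.Iic x, stdNormalPDF t

/-- Density of a centered multivariate normal with covariance `S`, for a
general finite index type. -/
noncomputable def mvNormalPDF' {ι : Type*} [Fintype ι] [DecidableEq ι]
    (S : Matrix ι ι ℝ) (x : ι → ℝ) : ℝ :=
  ((2 * Real.pi) ^ (Fintype.card ι : ℝ) * S.det) ^ (-(1 : ℝ) / 2) *
    Real.exp (-(dotProduct x (S⁻¹.mulVec x)) / 2)

/-- Centered classical skew-normal density `2 φ_d(x; Ω) Φ(αᵀ ω⁻¹ x)`. -/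
noncomputable def classicalSNPDF0 {ι : Type*} [Fintype ι] [DecidableEq ι]
    (Ω : Matrix ι ι ℝ) (α : ι → ℝ) (x : ι → ℝ) : ℝ :=
  2 * mvNormalPDF' Ω x * stdNormalCDF (∑ i, α i * (x i / Real.sqrt (Ω i i)))

lemma stdNormalPDF_pos (x : ℝ) : 0 < stdNormalPDF x := by
  unfold stdNormalPDF
  have h : 0 < Real.sqrt (2 * Real.pi) := Real.sqrt_pos.mpr (by positivity)
  exact mul_pos (inv_pos.mpr h) (Real.exp_pos _)

lemma integrable_stdNormalPDF : Integrable stdNormalPDF := by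
  have h : stdNormalPDF = fun x => (Real.sqrt (2 * Real.pi))⁻¹ *
      Real.exp (-(1/2 : ℝ) * x ^ 2) := by
    funext x
    unfold stdNormalPDF
    rw [show -x ^ 2 / 2 = -(1/2 : ℝ) * x ^ 2 by ring]
  rw [h]
  exact (integrable_exp_neg_mul_sq (by norm_num)).const_mul _

lemma stdNormalCDF_mono {s t : ℝ} (h : s ≤ t) : stdNormalCDF s ≤ stdNormalCDF t :=
  setIntegral_mono_set integrable_stdNormalPDF.integrableOn
    (Filter.Eventually.of_forall fun x => (stdNormalPDF_pos x).le)
    ((Set.Iic_subset_Iic.mpr h).eventuallyLE)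

lemma stdNormalCDF_le (x : ℝ) : stdNormalCDF x ≤ ∫ t, stdNormalPDF t :=
  setIntegral_le_integral integrable_stdNormalPDF
    (Filter.Eventually.of_forall fun x => (stdNormalPDF_pos x).le)

lemma stdNormalCDF_strictMono {s t : ℝ} (h : s < t) :
    stdNormalCDF s < stdNormalCDF t := by
  have hsub : stdNormalCDF t - stdNormalCDF s = ∫ x in s..t, stdNormalPDF x :=
    intervalIntegral.integral_Iic_sub_Iic integrable_stdNormalPDF.integrableOn
      integrable_stdNormalPDF.integrableOn
  have hpos : 0 < ∫ x in s..t, stdNormalPDF x :=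
    intervalIntegral.intervalIntegral_pos_of_pos integrable_stdNormalPDF.intervalIntegrable
      stdNormalPDF_pos h
  unfold stdNormalCDF at hsub ⊢
  linarith

lemma stdNormalCDF_pos (x : ℝ) : 0 < stdNormalCDF x := by
  have h0 : (0:ℝ) ≤ stdNormalCDF (x - 1) :=
    setIntegral_nonneg measurableSet_Iic fun y _ => (stdNormalPDF_pos y).le
  have := stdNormalCDF_strictMono (show x - 1 < x by linarith)
  linarith

/-- The key analytic fact: the standard normal cdf cannot satisfy the
functional equation `Φ(u+v) Φ(0) = exp(κ u v) Φ(u) Φ(v)`. -/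
lemma no_skew_factorization (κ : ℝ)
    (h : ∀ u v : ℝ, stdNormalCDF (u + v) * stdNormalCDF 0
        = Real.exp (κ * (u * v)) * (stdNormalCDF u * stdNormalCDF v)) : False := by
  set Φ := stdNormalCDF with hΦ
  set M := ∫ t, stdNormalPDF t with hM
  have hc : 0 < Φ 0 := stdNormalCDF_pos 0
  have hle : ∀ x, Φ x ≤ M := stdNormalCDF_le
  have hMpos : 0 < M := lt_of_lt_of_le hc (hle 0)
  have hbound : ∀ t : ℝ, 0 ≤ t →
      Φ 0 ^ 2 / M ^ 2 ≤ Real.exp (κ * t ^ 2) ∧ Real.exp (κ * t ^ 2) ≤ M / Φ 0 := by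
    intro t ht
    have h1 := h t t
    have hΦt : Φ 0 ≤ Φ t := stdNormalCDF_mono ht
    have hΦ2t : Φ 0 ≤ Φ (t + t) := stdNormalCDF_mono (by linarith)
    have hP : 0 < Φ t := stdNormalCDF_pos t
    have hle2t := hle (t + t)
    have hlet := hle t
    rw [show κ * (t * t) = κ * t ^ 2 by ring] at h1
    have hexp := Real.exp_pos (κ * t ^ 2)
    have s1 : Φ 0 * Φ 0 ≤ Φ (t + t) * Φ 0 := mul_le_mul_of_nonneg_right hΦ2t hc.le
    have s2 : Φ t * Φ t ≤ M * M := mul_le_mul hlet hlet hP.le hMpos.le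
    have s3 : Real.exp (κ * t ^ 2) * (Φ t * Φ t) ≤ Real.exp (κ * t ^ 2) * (M * M) :=
      mul_le_mul_of_nonneg_left s2 hexp.le
    have s4 : Φ 0 * Φ 0 ≤ Φ t * Φ t := mul_le_mul hΦt hΦt hc.le hP.le
    have s5 : Real.exp (κ * t ^ 2) * (Φ 0 * Φ 0) ≤ Real.exp (κ * t ^ 2) * (Φ t * Φ t) :=
      mul_le_mul_of_nonneg_left s4 hexp.le
    have s6 : Φ (t + t) * Φ 0 ≤ M * Φ 0 := mul_le_mul_of_nonneg_right hle2t hc.le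
    constructor
    · rw [div_le_iff₀ (by positivity)]
      nlinarith
    · rw [le_div_iff₀ hc]
      nlinarith
  have hκ : κ = 0 := by
    rcases lt_trichotomy κ 0 with hneg | h0 | hpos
    · exfalso
      set c₁ := Φ 0 ^ 2 / M ^ 2 with hc₁
      have hc₁pos : 0 < c₁ := by positivity
      have hnegpos : 0 < -κ := by linarith
      set t := Real.sqrt ((|Real.log c₁| + 1) / (-κ)) with ht
      have harg : 0 ≤ (|Real.log c₁| + 1) / (-κ) :=
        div_nonneg (by positivity) hnegpos.le
      have h2 : κ * t ^ 2 = -(|Real.log c₁| + 1) := by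
        rw [ht, Real.sq_sqrt harg]
        field_simp
        rw [div_self hneg.ne]
      have hB := (hbound t (Real.sqrt_nonneg _)).1
      rw [h2] at hB
      have hlt : Real.exp (-(|Real.log c₁| + 1)) < c₁ := by
        have habs : -(|Real.log c₁| + 1) < Real.log c₁ := by
          rcases abs_cases (Real.log c₁) with ⟨he, _⟩ | ⟨he, _⟩ <;> linarith
        calc Real.exp (-(|Real.log c₁| + 1)) < Real.exp (Real.log c₁) :=
              Real.exp_lt_exp.mpr habs
          _ = c₁ := Real.exp_log hc₁pos
      linarith
    · exact h0
    · exfalso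
      set c₂ := M / Φ 0 with hc₂
      have hc₂pos : 0 < c₂ := by positivity
      set t := Real.sqrt ((|Real.log c₂| + 1) / κ) with ht
      have harg : 0 ≤ (|Real.log c₂| + 1) / κ :=
        div_nonneg (by positivity) hpos.le
      have h2 : κ * t ^ 2 = |Real.log c₂| + 1 := by
        rw [ht, Real.sq_sqrt harg]
        field_simp
      have hB := (hbound t (Real.sqrt_nonneg _)).2
      rw [h2] at hB
      have hgt : c₂ < Real.exp (|Real.log c₂| + 1) := by
        have habs : Real.log c₂ < |Real.log c₂| + 1 := by
          rcases abs_cases (Real.log c₂) with ⟨he, _⟩ | ⟨he, _⟩ <;> linarith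
        calc c₂ = Real.exp (Real.log c₂) := (Real.exp_log hc₂pos).symm
          _ < Real.exp (|Real.log c₂| + 1) := Real.exp_lt_exp.mpr habs
      linarith
  subst hκ
  simp only [zero_mul, Real.exp_zero, one_mul] at h
  set r := Φ 1 / Φ 0 with hr
  have hΦ1 : Φ 0 < Φ 1 := stdNormalCDF_strictMono one_pos
  have hrgt : 1 < r := (one_lt_div hc).mpr hΦ1
  have hgeo : ∀ n : ℕ, Φ (n : ℝ) = Φ 0 * r ^ n := by
    intro n
    induction n with
    | zero => simp
    | succ n ih =>
      have h1 := h (n : ℝ) 1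
      have hstep : Φ ((n : ℝ) + 1) = Φ (n : ℝ) * Φ 1 / Φ 0 := by
        field_simp
        linarith [h1]
      push_cast
      rw [hstep, ih, hr]
      field_simp
      ring_nf
      simp [hc.ne']
  obtain ⟨n, hn⟩ := pow_unbounded_of_one_lt (M / Φ 0) hrgt
  have hlt : M < Φ 0 * r ^ n := by
    rw [div_lt_iff₀ hc] at hn
    linarith [hn]
  have := hle (n : ℝ)
  rw [hgeo n] at this
  linarith

/-- If a classical skew-normal density with block-diagonal `Ω` factorizes as a
product of a function of the first block of coordinates and a function of the
second block, then at least one of the two corresponding blocks of the slant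
parameter `α` vanishes. -/
theorem classical_skew_normal_factorization {d₁ d₂ : ℕ}
    (Ω : Matrix (Fin d₁ ⊕ Fin d₂) (Fin d₁ ⊕ Fin d₂) ℝ) (hΩ : Ω.PosDef)
    (hblock : ∀ (i : Fin d₁) (j : Fin d₂),
      Ω (Sum.inl i) (Sum.inr j) = 0 ∧ Ω (Sum.inr j) (Sum.inl i) = 0)
    (α : Fin d₁ ⊕ Fin d₂ → ℝ)
    (hfact : ∃ (g₁ : (Fin d₁ → ℝ) → ℝ) (g₂ : (Fin d₂ → ℝ) → ℝ),
      ∀ x : Fin d₁ ⊕ Fin d₂ → ℝ,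
        classicalSNPDF0 Ω α x = g₁ (x ∘ Sum.inl) * g₂ (x ∘ Sum.inr)) :
    (∀ i : Fin d₁, α (Sum.inl i) = 0) ∨ (∀ j : Fin d₂, α (Sum.inr j) = 0) := by
  by_contra hcon
  push_neg at hcon
  obtain ⟨⟨i, ha⟩, ⟨j, hb⟩⟩ := hcon
  obtain ⟨g₁, g₂, hg⟩ := hfact
  have hdiagpos : ∀ p : Fin d₁ ⊕ Fin d₂, 0 < Ω p p := by
    intro p
    have hne : (Pi.single p 1 : Fin d₁ ⊕ Fin d₂ → ℝ) ≠ 0 := by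
      intro hcontra
      have := congrFun hcontra p
      simp at this
    have h := hΩ.dotProduct_mulVec_pos hne
    simpa using h
  set si := Real.sqrt (Ω (Sum.inl i) (Sum.inl i)) with hsi
  set sj := Real.sqrt (Ω (Sum.inr j) (Sum.inr j)) with hsj
  have hsipos : 0 < si := Real.sqrt_pos.mpr (hdiagpos _)
  have hsjpos : 0 < sj := Real.sqrt_pos.mpr (hdiagpos _)
  set a := α (Sum.inl i) with haa
  set b := α (Sum.inr j) with hbb
  set X : ℝ → ℝ → (Fin d₁ ⊕ Fin d₂ → ℝ) := fun u v =>
    Pi.single (Sum.inl i) (u * si / a) + Pi.single (Sum.inr j) (v * sj / b) with hX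
  have hXl : ∀ u v, (X u v) ∘ Sum.inl = Pi.single i (u * si / a) := by
    intro u v
    funext k
    simp [hX, Pi.single_apply]
  have hXr : ∀ u v, (X u v) ∘ Sum.inr = Pi.single j (v * sj / b) := by
    intro u v
    funext k
    simp [hX, Pi.single_apply]
  have hsum : ∀ u v, (∑ p, α p * (X u v p / Real.sqrt (Ω p p))) = u + v := by
    intro u v
    have hsplit : ∀ p, α p * (X u v p / Real.sqrt (Ω p p)) =
        α p * ((Pi.single (Sum.inl i) (u * si / a) : Fin d₁ ⊕ Fin d₂ → ℝ) p /
          Real.sqrt (Ω p p)) +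
        α p * ((Pi.single (Sum.inr j) (v * sj / b) : Fin d₁ ⊕ Fin d₂ → ℝ) p /
          Real.sqrt (Ω p p)) := by
      intro p
      simp only [hX, Pi.add_apply]
      ring
    rw [Finset.sum_congr rfl fun p _ => hsplit p, Finset.sum_add_distrib,
      Fintype.sum_eq_single (Sum.inl i)
        (fun p hp => by simp [Pi.single_apply, hp]),
      Fintype.sum_eq_single (Sum.inr j)
        (fun p hp => by simp [Pi.single_apply, hp])]
    simp only [Pi.single_eq_same, ← haa, ← hbb, ← hsi, ← hsj]
    field_simp
  have hquad : ∀ u v, dotProduct (X u v) (Ω⁻¹.mulVec (X u v)) =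
      ((si / a) ^ 2 * Ω⁻¹ (Sum.inl i) (Sum.inl i)) * u ^ 2 +
      ((si / a) * (sj / b) *
        (Ω⁻¹ (Sum.inl i) (Sum.inr j) + Ω⁻¹ (Sum.inr j) (Sum.inl i))) * (u * v) +
      ((sj / b) ^ 2 * Ω⁻¹ (Sum.inr j) (Sum.inr j)) * v ^ 2 := by
    intro u v
    simp only [hX, Matrix.mulVec_add, Matrix.mulVec_single, dotProduct_add,
      add_dotProduct, single_dotProduct, Pi.smul_apply, Matrix.col_apply, op_smul_eq_mul]
    ring
  set A : ℝ := (si / a) ^ 2 * Ω⁻¹ (Sum.inl i) (Sum.inl i) with hA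
  set K : ℝ := (si / a) * (sj / b) *
      (Ω⁻¹ (Sum.inl i) (Sum.inr j) + Ω⁻¹ (Sum.inr j) (Sum.inl i)) with hK
  set B : ℝ := (sj / b) ^ 2 * Ω⁻¹ (Sum.inr j) (Sum.inr j) with hB
  set C₀ : ℝ := ((2 * Real.pi) ^ (Fintype.card (Fin d₁ ⊕ Fin d₂) : ℝ) * Ω.det) ^
      (-(1 : ℝ) / 2) with hC₀
  have hC₀pos : 0 < C₀ := by
    rw [hC₀]
    exact Real.rpow_pos_of_pos
      (mul_pos (Real.rpow_pos_of_pos (by positivity) _) hΩ.det_pos) _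
  have hF : ∀ u v, classicalSNPDF0 Ω α (X u v) =
      2 * (C₀ * Real.exp (-(A * u ^ 2 + K * (u * v) + B * v ^ 2) / 2)) *
        stdNormalCDF (u + v) := by
    intro u v
    simp only [classicalSNPDF0, mvNormalPDF']
    rw [hsum u v, hquad u v, hC₀]
  have hEq : ∀ u v : ℝ, stdNormalCDF (u + v) * stdNormalCDF 0 =
      Real.exp ((K / 2) * (u * v)) * (stdNormalCDF u * stdNormalCDF v) := by
    intro u v
    have hE : classicalSNPDF0 Ω α (X u v) * classicalSNPDF0 Ω α (X 0 0)
        = classicalSNPDF0 Ω α (X u 0) * classicalSNPDF0 Ω α (X 0 v) := by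
      rw [hg (X u v), hg (X 0 0), hg (X u 0), hg (X 0 v),
        hXl u v, hXl 0 0, hXl u 0, hXl 0 v, hXr u v, hXr 0 0, hXr u 0, hXr 0 v]
      ring
    rw [hF u v, hF 0 0, hF u 0, hF 0 v] at hE
    simp only [add_zero, zero_add] at hE
    have e1 : Real.exp (-(A * u ^ 2 + K * (u * 0) + B * 0 ^ 2) / 2) *
        Real.exp (-(A * 0 ^ 2 + K * (0 * v) + B * v ^ 2) / 2) =
        Real.exp (-(A * u ^ 2 + K * (u * v) + B * v ^ 2) / 2) *
        Real.exp (-(A * 0 ^ 2 + K * (0 * 0) + B * 0 ^ 2) / 2) *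
        Real.exp ((K / 2) * (u * v)) := by
      rw [← Real.exp_add, ← Real.exp_add, ← Real.exp_add]
      congr 1
      ring
    have hP : (2 * (C₀ * Real.exp (-(A * u ^ 2 + K * (u * v) + B * v ^ 2) / 2))) *
        (2 * (C₀ * Real.exp (-(A * 0 ^ 2 + K * (0 * 0) + B * 0 ^ 2) / 2))) ≠ 0 := by
      positivity
    apply mul_left_cancel₀ hP
    calc (2 * (C₀ * Real.exp (-(A * u ^ 2 + K * (u * v) + B * v ^ 2) / 2))) *
          (2 * (C₀ * Real.exp (-(A * 0 ^ 2 + K * (0 * 0) + B * 0 ^ 2) / 2))) *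
          (stdNormalCDF (u + v) * stdNormalCDF 0)
        = (2 * (C₀ * Real.exp (-(A * u ^ 2 + K * (u * v) + B * v ^ 2) / 2)) *
            stdNormalCDF (u + v)) *
          (2 * (C₀ * Real.exp (-(A * 0 ^ 2 + K * (0 * 0) + B * 0 ^ 2) / 2)) *
            stdNormalCDF 0) := by ring
      _ = (2 * (C₀ * Real.exp (-(A * u ^ 2 + K * (u * 0) + B * 0 ^ 2) / 2)) *
            stdNormalCDF u) *
          (2 * (C₀ * Real.exp (-(A * 0 ^ 2 + K * (0 * v) + B * v ^ 2) / 2)) *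
            stdNormalCDF v) := hE
      _ = (2 * (C₀ * Real.exp (-(A * u ^ 2 + K * (u * v) + B * v ^ 2) / 2))) *
          (2 * (C₀ * Real.exp (-(A * 0 ^ 2 + K * (0 * 0) + B * 0 ^ 2) / 2))) *
          (Real.exp ((K / 2) * (u * v)) * (stdNormalCDF u * stdNormalCDF v)) := by
        linear_combination (stdNormalCDF u * stdNormalCDF v * 4 * C₀ ^ 2) * e1
  exact no_skew_factorization (K / 2) hEq
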